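/- For every real number s and all nonnegative integers m and n, the mixed partial derivative ∂_x^m ∂_y^n (e^{−x} + e^{−y} − 1)^s evaluated at (x,y) = (0,0) equals (−1)^{m+n} · Σ_{ℓ=0}^{m} (s)_ℓ · S(m,ℓ) · (s−ℓ)^n, where (s)_ℓ = s(s−1)⋯(s−ℓ+1) is the falling factorial (with (s)_0 = 1) and S(m,ℓ) is the Stirling number of the second kind. -/

import Mathlib

/-- Stirling numbers of the second kind: `stirling2 n k` is the number of
partitions of an `n`-element set into `k` nonempty blocks. -/
def stirling2 : ℕ → ℕ → ℕ
  | 0, 0 => 1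
  | 0, _+1 => 0
  | _+1, 0 => 0
  | n+1, k+1 => (k + 1) * stirling2 n (k + 1) + stirling2 n k

/-- The falling factorial `(s)_ℓ = s (s-1) ⋯ (s - ℓ + 1)`, with `(s)_0 = 1`. -/
def fallingFactorial (s : ℝ) (l : ℕ) : ℝ := ∏ i ∈ Finset.range l, (s - i)

open Real Filter Topology

lemma stirling2_zero_right (n : ℕ) : stirling2 (n+1) 0 = 0 := rfl

lemma stirling2_eq_zero : ∀ {n k}, n < k → stirling2 n k = 0
  | 0, _+1, _ => rfl
  | n+1, k+1, h => by
      have h1 : n < k + 1 := by omega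
      have h2 : n < k := by omega
      simp [stirling2, stirling2_eq_zero h1, stirling2_eq_zero h2]

lemma ff_zero (s : ℝ) : fallingFactorial s 0 = 1 := rfl

lemma ff_succ (s : ℝ) (l : ℕ) :
    fallingFactorial s (l+1) = fallingFactorial s l * (s - l) :=
  Finset.prod_range_succ _ _

lemma ff_succ' (s : ℝ) (l : ℕ) :
    fallingFactorial s (l+1) = s * fallingFactorial (s-1) l := by
  rw [fallingFactorial, Finset.prod_range_succ', fallingFactorial]
  rw [Nat.cast_zero, sub_zero, mul_comm]
  congr 1
  apply Finset.prod_congr rfl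
  intro i _
  push_cast
  ring

lemma sum_shift {φ : ℕ → ℝ} {m : ℕ} (h0 : φ 0 = 0) (htop : φ (m+1) = 0) :
    ∑ l ∈ Finset.range (m+1), φ (l+1) = ∑ j ∈ Finset.range (m+1), φ j := by
  have h := Finset.sum_range_succ' φ (m+1)
  rw [h0, add_zero] at h
  rw [← h, Finset.sum_range_succ, htop, add_zero]

noncomputable def Tf (s : ℝ) (m n : ℕ) : ℝ :=
  ∑ l ∈ Finset.range (m+1), fallingFactorial s l * (stirling2 m l : ℝ) * (s - l) ^ n

lemma Tf_succ_left (s : ℝ) (m n : ℕ) :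
    Tf s (m+1) n =
      (∑ l ∈ Finset.range (m+1),
        (l:ℝ) * (fallingFactorial s l * (stirling2 m l : ℝ) * (s - l) ^ n))
      + s * Tf (s-1) m n := by
  rw [Tf, Finset.sum_range_succ']
  have h0 : fallingFactorial s 0 * (stirling2 (m+1) 0 : ℝ) * (s - ((0:ℕ):ℝ)) ^ n = 0 := by
    simp [stirling2_zero_right]
  rw [h0, add_zero]
  set φ : ℕ → ℝ := fun j => (j:ℝ) * (fallingFactorial s j * (stirling2 m j : ℝ) * (s - (j:ℝ)) ^ n) with hφ
  have hsplit : ∀ l ∈ Finset.range (m+1),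
      fallingFactorial s (l+1) * (stirling2 (m+1) (l+1) : ℝ) * (s - ((l+1:ℕ):ℝ)) ^ n
        = φ (l+1)
          + s * (fallingFactorial (s-1) l * (stirling2 m l : ℝ) * ((s-1) - l) ^ n) := by
    intro l _
    show fallingFactorial s (l+1) * ((((l + 1) * stirling2 m (l + 1) + stirling2 m l : ℕ)) : ℝ) * _ = _
    rw [hφ]
    simp only []
    rw [ff_succ' s l]
    push_cast
    have h1 : s - ((l:ℝ)+1) = (s-1) - l := by ring
    rw [h1]
    ring
  rw [Finset.sum_congr rfl hsplit, Finset.sum_add_distrib, ← Finset.mul_sum]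
  congr 1
  exact sum_shift (by simp [hφ]) (by simp [hφ, stirling2_eq_zero (Nat.lt_succ_self m)])

lemma Tf_zero_left (s : ℝ) (n : ℕ) : Tf s 0 n = s ^ n := by
  simp [Tf, stirling2, ff_zero]

lemma Tf_zero_right (s : ℝ) (m : ℕ) : Tf s m 0 = s ^ m := by
  induction m generalizing s with
  | zero => simp [Tf, stirling2, ff_zero]
  | succ m ih =>
    rw [Tf_succ_left]
    have h2 : s * Tf (s-1) m 0 = ∑ l ∈ Finset.range (m+1),
        (s - l) * (fallingFactorial s l * (stirling2 m l : ℝ) * (s - l) ^ 0) := by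
      rw [Tf, Finset.mul_sum]
      apply Finset.sum_congr rfl
      intro l _
      rw [pow_zero, pow_zero]
      rw [show s * (fallingFactorial (s-1) l * (stirling2 m l : ℝ) * 1)
            = (s * fallingFactorial (s-1) l) * (stirling2 m l : ℝ) from by ring,
          ← ff_succ', ff_succ]
      ring
    rw [h2, ← Finset.sum_add_distrib]
    have h3 : ∀ l ∈ Finset.range (m+1),
        (l:ℝ) * (fallingFactorial s l * (stirling2 m l : ℝ) * (s - l) ^ 0)
          + (s - l) * (fallingFactorial s l * (stirling2 m l : ℝ) * (s - l) ^ 0)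
        = s * (fallingFactorial s l * (stirling2 m l : ℝ) * (s - l) ^ 0) := by
      intro l _; ring
    rw [Finset.sum_congr rfl h3, ← Finset.mul_sum]
    have h4 : (∑ l ∈ Finset.range (m+1),
        fallingFactorial s l * (stirling2 m l : ℝ) * (s - l) ^ 0) = Tf s m 0 := rfl
    rw [h4, ih s, pow_succ, mul_comm]

lemma Tf_rec (s : ℝ) (m n : ℕ) :
    Tf s (m+1) n + Tf s m (n+1) = s * Tf s m n + s * Tf (s-1) m n := by
  rw [Tf_succ_left]
  have : Tf s m (n+1) = ∑ l ∈ Finset.range (m+1),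
      (s - l) * (fallingFactorial s l * (stirling2 m l : ℝ) * (s - l) ^ n) := by
    rw [Tf]
    apply Finset.sum_congr rfl
    intro l _
    ring
  rw [this]
  have : Tf s m n = ∑ l ∈ Finset.range (m+1),
      fallingFactorial s l * (stirling2 m l : ℝ) * (s - l) ^ n := rfl
  rw [this, Finset.mul_sum]
  have key : (∑ l ∈ Finset.range (m+1),
        (l:ℝ) * (fallingFactorial s l * (stirling2 m l : ℝ) * (s - l) ^ n))
      + (∑ l ∈ Finset.range (m+1),
        (s - l) * (fallingFactorial s l * (stirling2 m l : ℝ) * (s - l) ^ n))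
      = ∑ l ∈ Finset.range (m+1), s * (fallingFactorial s l * (stirling2 m l : ℝ) * (s - l) ^ n) := by
    rw [← Finset.sum_add_distrib]
    exact Finset.sum_congr rfl (by intro l _; ring)
  linarith [key]

lemma Tf_symm (m : ℕ) : ∀ (n : ℕ) (s : ℝ), Tf s m n = Tf s n m := by
  induction m with
  | zero => intro n s; rw [Tf_zero_left, Tf_zero_right]
  | succ m ih =>
    intro n s
    have h1 := Tf_rec s m n
    have h2 := Tf_rec s n m
    have e1 : Tf s (m+1) n = s * Tf s m n + s * Tf (s-1) m n - Tf s m (n+1) := by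
      linarith
    rw [e1, ih n s, ih n (s-1), ih (n+1) s]
    linarith

lemma hasDerivAt_G (x y : ℝ) :
    HasDerivAt (fun y : ℝ => Real.exp (-x) + Real.exp (-y) - 1) (-Real.exp (-y)) y := by
  have h1 : HasDerivAt (fun y : ℝ => Real.exp (-y)) (-Real.exp (-y)) y := by
    simpa [Function.comp_def] using ((Real.hasDerivAt_exp (-y)).comp y (hasDerivAt_neg y))
  simpa using (h1.const_add (Real.exp (-x))).sub_const 1

lemma hasDerivAt_E (c y : ℝ) :
    HasDerivAt (fun y : ℝ => Real.exp (c*y)) (c * Real.exp (c*y)) y := by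
  have h1 : HasDerivAt (fun y : ℝ => c*y) c y := by
    simpa using (hasDerivAt_id y).const_mul c
  simpa [Function.comp_def, mul_comm] using (Real.hasDerivAt_exp (c*y)).comp y h1

lemma inner_eq (s x : ℝ) (n : ℕ) : ∀ y : ℝ, 0 < Real.exp (-x) + Real.exp (-y) - 1 →
    iteratedDeriv n (fun y : ℝ => (Real.exp (-x) + Real.exp (-y) - 1) ^ s) y
      = ∑ k ∈ Finset.range (n+1),
          (-1:ℝ)^n * (stirling2 n k : ℝ) * fallingFactorial s k *
            (Real.exp (-(k:ℝ)*y) * (Real.exp (-x) + Real.exp (-y) - 1) ^ (s - (k:ℝ))) := by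
  induction n with
  | zero =>
    intro y _
    simp [fallingFactorial, stirling2]
  | succ n ih =>
    intro y hy
    rw [iteratedDeriv_succ]
    have hopen : IsOpen {z : ℝ | 0 < Real.exp (-x) + Real.exp (-z) - 1} := by
      apply isOpen_lt continuous_const
      continuity
    have hev : iteratedDeriv n (fun y : ℝ => (Real.exp (-x) + Real.exp (-y) - 1) ^ s)
        =ᶠ[𝓝 y] (fun y => ∑ k ∈ Finset.range (n+1),
          (-1:ℝ)^n * (stirling2 n k : ℝ) * fallingFactorial s k *
            (Real.exp (-(k:ℝ)*y) * (Real.exp (-x) + Real.exp (-y) - 1) ^ (s - (k:ℝ)))) := by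
      filter_upwards [hopen.mem_nhds hy] with z hz
      exact ih z hz
    rw [hev.deriv_eq]
    have hterm : ∀ k ∈ Finset.range (n+1), HasDerivAt
        (fun y : ℝ => (-1:ℝ)^n * (stirling2 n k : ℝ) * fallingFactorial s k *
          (Real.exp (-(k:ℝ)*y) * (Real.exp (-x) + Real.exp (-y) - 1) ^ (s - (k:ℝ))))
        ((-1:ℝ)^n * (stirling2 n k : ℝ) * fallingFactorial s k * (-(k:ℝ)) *
            (Real.exp (-(k:ℝ)*y) * (Real.exp (-x) + Real.exp (-y) - 1) ^ (s - (k:ℝ)))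
          + (-1:ℝ)^(n+1) * (stirling2 n k : ℝ) * fallingFactorial s (k+1) *
            (Real.exp (-((k:ℝ)+1)*y) * (Real.exp (-x) + Real.exp (-y) - 1) ^ (s - ((k:ℝ)+1)))) y := by
      intro k _
      have hE := hasDerivAt_E (-(k:ℝ)) y
      have hP : HasDerivAt (fun y : ℝ => (Real.exp (-x) + Real.exp (-y) - 1) ^ (s - (k:ℝ)))
          ((s - (k:ℝ)) * (Real.exp (-x) + Real.exp (-y) - 1) ^ (s - (k:ℝ) - 1) * (-Real.exp (-y))) y :=
        by have := (Real.hasDerivAt_rpow_const (x := Real.exp (-x) + Real.exp (-y) - 1) (p := s - (k:ℝ)) (Or.inl hy.ne')).comp y (hasDerivAt_G x y); exact this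
      have h := (hE.mul hP).const_mul ((-1:ℝ)^n * (stirling2 n k : ℝ) * fallingFactorial s k)
      refine h.congr_deriv ?_
      have e1 : Real.exp (-((k:ℝ)+1)*y) = Real.exp (-(k:ℝ)*y) * Real.exp (-y) := by
        rw [← Real.exp_add]; congr 1; ring
      have e2 : s - ((k:ℝ)+1) = s - (k:ℝ) - 1 := by ring
      rw [e1, e2, ff_succ]
      ring
    have hD := (HasDerivAt.fun_sum hterm).deriv
    rw [hD]
    set φ : ℕ → ℝ := fun j => (-1:ℝ)^(n+1) * (j:ℝ) * (stirling2 n j : ℝ) * fallingFactorial s j *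
        (Real.exp (-(j:ℝ)*y) * (Real.exp (-x) + Real.exp (-y) - 1) ^ (s - (j:ℝ))) with hφ
    have hsplit : ∀ k ∈ Finset.range (n+1),
        (-1:ℝ)^(n+1) * (stirling2 (n+1) (k+1) : ℝ) * fallingFactorial s (k+1) *
          (Real.exp (-((k+1:ℕ):ℝ)*y) * (Real.exp (-x) + Real.exp (-y) - 1) ^ (s - ((k+1:ℕ):ℝ)))
        = φ (k+1)
          + (-1:ℝ)^(n+1) * (stirling2 n k : ℝ) * fallingFactorial s (k+1) *
            (Real.exp (-((k:ℝ)+1)*y) * (Real.exp (-x) + Real.exp (-y) - 1) ^ (s - ((k:ℝ)+1))) := by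
      intro k _
      show (-1:ℝ)^(n+1) * ((((k + 1) * stirling2 n (k + 1) + stirling2 n k : ℕ)) : ℝ) * _ * _ = _
      rw [hφ]
      push_cast
      ring
    have h00 : (-1:ℝ)^(n+1) * (stirling2 (n+1) 0 : ℝ) * fallingFactorial s 0 *
        (Real.exp (-((0:ℕ):ℝ)*y) * (Real.exp (-x) + Real.exp (-y) - 1) ^ (s - ((0:ℕ):ℝ))) = 0 := by
      show (-1:ℝ)^(n+1) * ((0:ℕ) : ℝ) * _ * _ = 0
      simp
    have hA : ∑ k ∈ Finset.range (n+1), φ (k+1) = ∑ j ∈ Finset.range (n+1), φ j := by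
      apply sum_shift
      · simp [hφ]
      · simp [hφ, stirling2_eq_zero (Nat.lt_succ_self n)]
    conv_rhs => rw [Finset.sum_range_succ']
    rw [h00, add_zero, Finset.sum_congr rfl hsplit, Finset.sum_add_distrib,
      Finset.sum_add_distrib, hA]
    congr 1
    apply Finset.sum_congr rfl
    intro j _
    rw [hφ]
    push_cast
    ring

lemma iteratedDeriv_fun_sum' {ι : Type*} (u : Finset ι) (f : ι → ℝ → ℝ) (m : ℕ)
    (h : ∀ j ∈ u, ContDiff ℝ m (f j)) (x : ℝ) :
    iteratedDeriv m (fun x => ∑ j ∈ u, f j x) x = ∑ j ∈ u, iteratedDeriv m (f j) x := by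
  simp only [iteratedDeriv_eq_iteratedFDeriv]
  rw [show (fun x => ∑ j ∈ u, f j x) = (∑ j ∈ u, f j ·) from rfl, iteratedFDeriv_sum h]
  simp [ContinuousMultilinearMap.sum_apply]

lemma iteratedDeriv_const_mul' (C : ℝ) (f : ℝ → ℝ) (m : ℕ) (h : ContDiff ℝ m f) (x : ℝ) :
    iteratedDeriv m (fun x => C * f x) x = C * iteratedDeriv m f x := by
  simp only [← iteratedDerivWithin_univ]
  exact iteratedDerivWithin_const_mul (Set.mem_univ x) uniqueDiffOn_univ C h.contDiffWithinAt

/-- `∂_x^m ∂_y^n (e^{-x} + e^{-y} - 1)^s` at `(x,y) = (0,0)` equals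
`(-1)^{m+n} Σ_{ℓ=0}^{m} (s)_ℓ S(m,ℓ) (s-ℓ)^n`, where the power on the left-hand
side is the real power `a ^ b = exp (b * log a)`. -/
theorem mixed_deriv_exp_neg_add_exp_neg_sub_one_rpow (s : ℝ) (m n : ℕ) :
    iteratedDeriv m (fun x : ℝ =>
        iteratedDeriv n (fun y : ℝ => (Real.exp (-x) + Real.exp (-y) - 1) ^ s) 0) 0 =
      (-1 : ℝ) ^ (m + n) *
        ∑ l ∈ Finset.range (m + 1),
          fallingFactorial s l * (stirling2 m l : ℝ) * (s - l) ^ n := by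
  have hfun : (fun x : ℝ =>
        iteratedDeriv n (fun y : ℝ => (Real.exp (-x) + Real.exp (-y) - 1) ^ s) 0)
      = fun x : ℝ => ∑ k ∈ Finset.range (n+1),
          (-1:ℝ)^n * (stirling2 n k : ℝ) * fallingFactorial s k *
            Real.exp (((k:ℝ) - s) * x) := by
    funext x
    have h0 : 0 < Real.exp (-x) + Real.exp (-(0:ℝ)) - 1 := by
      rw [neg_zero, Real.exp_zero, add_sub_cancel_right]
      exact Real.exp_pos _
    rw [inner_eq s x n 0 h0]
    apply Finset.sum_congr rfl
    intro k _
    rw [mul_zero, Real.exp_zero, one_mul, neg_zero, Real.exp_zero, add_sub_cancel_right]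
    rw [Real.rpow_def_of_pos (Real.exp_pos _), Real.log_exp]
    congr 2
    ring
  rw [hfun]
  rw [iteratedDeriv_fun_sum]
  · have hval : ∀ k ∈ Finset.range (n+1),
        iteratedDeriv m (fun x : ℝ => (-1:ℝ)^n * (stirling2 n k : ℝ) * fallingFactorial s k *
          Real.exp (((k:ℝ) - s) * x)) 0
        = (-1:ℝ)^n * (stirling2 n k : ℝ) * fallingFactorial s k * ((k:ℝ) - s)^m := by
      intro k _
      have hc : ContDiff ℝ m fun x : ℝ => Real.exp (((k:ℝ) - s) * x) :=
        Real.contDiff_exp.comp (contDiff_const.mul contDiff_id)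
      rw [iteratedDeriv_const_mul' _ _ _ hc]
      rw [iteratedDeriv_exp_const_mul]
      simp
    rw [Finset.sum_congr rfl hval]
    have : (-1 : ℝ) ^ (m + n) *
        (∑ l ∈ Finset.range (m + 1),
          fallingFactorial s l * (stirling2 m l : ℝ) * (s - l) ^ n)
        = (-1 : ℝ) ^ (m + n) * Tf s m n := rfl
    rw [this, Tf_symm m n s, Tf, Finset.mul_sum]
    apply Finset.sum_congr rfl
    intro k _
    have hp : ((k:ℝ) - s)^m = (-1:ℝ)^m * (s - (k:ℝ))^m := by
      rw [show (k:ℝ) - s = -(s - (k:ℝ)) from by ring, neg_pow]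
    rw [hp, pow_add]
    ring
  · intro k _
    have hc : ContDiff ℝ m fun x : ℝ => Real.exp (((k:ℝ) - s) * x) :=
      Real.contDiff_exp.comp (contDiff_const.mul contDiff_id)
    exact (contDiff_const.mul hc).contDiffAt
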